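/- For n ≥ 1 and 1 ≤ p < ∞, the norm on S_n^p given by ‖f‖ = ‖f‖_∞ + ‖f'‖_∞ + ⋯ + ‖f^{(n-1)}‖_∞ + ‖f^{(n)}‖_{H^p} is equivalent to the recursively defined norm ‖f‖_{S_n^p}. -/

import Mathlib

open MeasureTheory Metric Set Filter

/-- The Hardy space `p`-norm on the unit disk (as an extended real). -/
noncomputable def hardyNorm (p : ℝ) (f : ℂ → ℂ) : ENNReal :=
  ⨆ r : Set.Ioo (0:ℝ) 1,
    ((∫⁻ θ in Set.Ioc (0:ℝ) (2*Real.pi),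
        ENNReal.ofReal (‖f ((r:ℝ) * Complex.exp (θ * Complex.I))‖ ^ p)) /
      ENNReal.ofReal (2*Real.pi)) ^ (1/p)

/-- Sup norm over the unit disk. -/
noncomputable def supNorm (f : ℂ → ℂ) : ENNReal :=
  ⨆ z ∈ Metric.ball (0:ℂ) 1, ENNReal.ofReal (‖f z‖)

/-- The recursively defined norm of `S_n^p`: `‖f‖_{S_n^p} = |f 0| + ‖f'‖_{S_{n-1}^p}`. -/
noncomputable def snNorm : ℕ → ℝ → (ℂ → ℂ) → ENNReal
  | 0, p, f => hardyNorm p f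
  | n+1, p, f => ENNReal.ofReal (‖f 0‖) + snNorm n p (deriv f)

/-- Membership in the Hardy space `H^p` of the unit disk. -/
def MemHp (p : ℝ) (f : ℂ → ℂ) : Prop :=
  DifferentiableOn ℂ f (Metric.ball 0 1) ∧ hardyNorm p f < ⊤

/-- Membership in `S_n^p`: analytic on the disk with `n`-th derivative in `H^p`. -/
def MemS (n : ℕ) (p : ℝ) (f : ℂ → ℂ) : Prop :=
  DifferentiableOn ℂ f (Metric.ball 0 1) ∧ hardyNorm p (iteratedDeriv n f) < ⊤

/-- Membership in `S_{n,0}^p`: members of `S_n^p` whose first `n` Taylor coefficients vanish. -/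
def MemS0 (n : ℕ) (p : ℝ) (f : ℂ → ℂ) : Prop :=
  MemS n p f ∧ ∀ m < n, iteratedDeriv m f 0 = 0

/-- `(V_n f)(z) = (1/(n-1)!) ∫_0^z (z-ζ)^{n-1} f(ζ) dζ`, along the segment `ζ = t z`. -/
noncomputable def Vop (n : ℕ) (f : ℂ → ℂ) (z : ℂ) : ℂ :=
  (1 / (Nat.factorial (n-1) : ℂ)) *
    ∫ t in (0:ℝ)..1, z * (z - (t:ℂ) * z) ^ (n-1) * f ((t:ℂ) * z)

/-- The Volterra operator `(T_z f)(z) = ∫_0^z f(ω) dω` along the segment. -/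
noncomputable def Volterra (f : ℂ → ℂ) (z : ℂ) : ℂ :=
  ∫ t in (0:ℝ)..1, z * f ((t:ℂ) * z)

lemma diffOn_deriv (g : ℂ → ℂ) (hg : DifferentiableOn ℂ g (ball 0 1)) :
    DifferentiableOn ℂ (deriv g) (ball 0 1) :=
  ((hg.analyticOnNhd isOpen_ball).deriv).differentiableOn

lemma diffOn_iteratedDeriv (f : ℂ → ℂ) (hf : DifferentiableOn ℂ f (ball 0 1)) (k : ℕ) :
    DifferentiableOn ℂ (iteratedDeriv k f) (ball 0 1) := by
  induction k with
  | zero => simpa using hf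
  | succ k ih => rw [iteratedDeriv_succ]; exact diffOn_deriv _ ih

lemma snNorm_eq (n : ℕ) (p : ℝ) (f : ℂ → ℂ) :
    snNorm n p f = ∑ k ∈ Finset.range n, ENNReal.ofReal (‖iteratedDeriv k f 0‖)
      + hardyNorm p (iteratedDeriv n f) := by
  induction n generalizing f with
  | zero => simp [snNorm]
  | succ n ih =>
      rw [show snNorm (n+1) p f = ENNReal.ofReal (‖f 0‖) + snNorm n p (deriv f) from rfl,
        ih (deriv f), Finset.sum_range_succ']
      simp only [iteratedDeriv_succ', iteratedDeriv_zero]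
      ring

-- circle point

lemma zeta_mem_ball {ρ : ℝ} (θ : ℝ) (h0 : 0 ≤ ρ) (h1 : ρ < 1) :
    (ρ:ℂ) * Complex.exp (θ * Complex.I) ∈ ball (0:ℂ) 1 := by
  simp only [mem_ball_zero_iff, norm_mul, Complex.norm_exp_ofReal_mul_I,
    mul_one, Complex.norm_real, Real.norm_eq_abs, abs_of_nonneg h0]
  exact h1

lemma abs_zeta {ρ : ℝ} (θ : ℝ) (h0 : 0 ≤ ρ) :
    ‖(ρ:ℂ) * Complex.exp (θ * Complex.I)‖ = ρ := by
  simp [Complex.norm_exp_ofReal_mul_I, abs_of_nonneg h0]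

lemma cont_circle {g : ℂ → ℂ} (hg : ContinuousOn g (ball 0 1)) {ρ : ℝ} (h0 : 0 ≤ ρ)
    (h1 : ρ < 1) : Continuous (fun θ : ℝ => g ((ρ:ℂ) * Complex.exp (θ * Complex.I))) := by
  rw [continuous_iff_continuousAt]
  intro θ
  have hc : Continuous (fun θ : ℝ => (ρ:ℂ) * Complex.exp (θ * Complex.I)) := by
    continuity
  exact ContinuousAt.comp (x := θ) (hg.continuousAt (isOpen_ball.mem_nhds (zeta_mem_ball θ h0 h1))) hc.continuousAt

lemma re_pos_of_abs_lt {w : ℂ} (h : ‖w‖ < 1) : 0 < (1 - w).re := by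
  have := Complex.abs_re_le_norm w
  have : w.re < 1 := lt_of_le_of_lt (le_trans (le_abs_self _) this) h
  simp [Complex.sub_re]; linarith

lemma slit_of_abs_lt {w : ℂ} (h : ‖w‖ < 1) : 1 - w ∈ Complex.slitPlane :=
  Or.inl (re_pos_of_abs_lt h)

lemma arg_ne_pi_of_abs_lt {w : ℂ} (h : ‖w‖ < 1) : (1 - w).arg ≠ Real.pi := by
  intro hc
  have := re_pos_of_abs_lt h
  have h2 := Complex.arg_eq_pi_iff.1 hc
  linarith [h2.1]

section Key2
-- A1: the log kernel as a radial integral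

lemma log_kernel_integral (z c : ℂ) (hc : c ≠ 0) (hzc : ‖z‖ < ‖c‖) :
    -c * Complex.log (1 - z / c) = ∫ t in (0:ℝ)..1, z * c / (c - (t:ℂ) * z) := by
  set w : ℂ := z / c with hw
  have hwabs : ‖w‖ < 1 := by
    rw [hw, norm_div, div_lt_one (norm_pos_iff.mpr hc)]
    exact hzc
  have habs_tw : ∀ t : ℝ, |t| ≤ 1 → ‖(t:ℂ) * w‖ < 1 := by
    intro t ht
    rw [norm_mul, Complex.norm_real, Real.norm_eq_abs]
    calc |t| * ‖w‖ ≤ 1 * ‖w‖ := by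
          exact mul_le_mul_of_nonneg_right ht (norm_nonneg _)
      _ < 1 := by rwa [one_mul]
  have hden : ∀ t : ℝ, |t| ≤ 1 → c - (t:ℂ) * z ≠ 0 := by
    intro t ht h
    have h2 : (1 : ℂ) - (t:ℂ) * w = 0 := by
      have : c * (1 - (t:ℂ) * w) = c - (t:ℂ) * z := by
        rw [hw, mul_sub, mul_one, mul_left_comm, mul_div_assoc', mul_comm c z, mul_div_assoc, div_self hc, mul_one]
      rw [← this] at h
      rcases mul_eq_zero.1 h with h' | h'
      · exact absurd h' hc
      · exact h'
    have := habs_tw t ht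
    rw [show (t:ℂ) * w = 1 from by linear_combination -h2] at this
    simp at this
  have hderiv : ∀ t ∈ uIcc (0:ℝ) 1,
      HasDerivAt (fun s : ℝ => -c * Complex.log (1 - (s:ℂ) * w)) (z * c / (c - (t:ℂ) * z)) t := by
    intro t ht
    rw [uIcc_of_le zero_le_one] at ht
    have ht1 : |t| ≤ 1 := abs_le.2 ⟨by linarith [ht.1], ht.2⟩
    have hinner : HasDerivAt (fun s : ℝ => 1 - (s:ℂ) * w) (-w) t := by
      have : HasDerivAt (fun y : ℂ => 1 - y * w) (-w) (t:ℂ) := by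
        simpa using ((hasDerivAt_id ((t:ℂ))).mul_const w).const_sub 1
      exact this.comp_ofReal
    have hlog : HasDerivAt (fun s : ℝ => Complex.log (1 - (s:ℂ) * w)) (-w / (1 - (t:ℂ) * w)) t :=
      HasDerivAt.clog_real (f := fun s : ℝ => 1 - (s:ℂ) * w) (x := t) hinner (slit_of_abs_lt (habs_tw t ht1))
    have hlog2 := hlog.const_mul (-c)
    refine hlog2.congr_deriv (Eq.symm ?_)
    have h1w : (1 : ℂ) - (t:ℂ) * w ≠ 0 := by
      intro h
      have := habs_tw t ht1
      rw [show (t:ℂ) * w = 1 from by linear_combination -h] at this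
      simp at this
    have hcw : c * w = z := by rw [hw]; field_simp
    have h2 : c - (t:ℂ) * z ≠ 0 := hden t ht1
    rw [show -c * (-w / (1 - (t:ℂ) * w)) = c * w / (1 - (t:ℂ) * w) by ring, hcw,
      div_eq_div_iff h2 h1w]
    linear_combination (-(t:ℂ)) * z * hcw
  have hint : IntervalIntegrable (fun t : ℝ => z * c / (c - (t:ℂ) * z)) volume 0 1 := by
    apply ContinuousOn.intervalIntegrable
    apply ContinuousOn.div continuousOn_const
    · fun_prop
    · intro t ht
      rw [uIcc_of_le zero_le_one] at ht
      exact hden t (abs_le.2 ⟨by linarith [ht.1], ht.2⟩)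
  rw [intervalIntegral.integral_eq_sub_of_hasDerivAt hderiv hint]
  simp [hw]

lemma cauchy_formula (g : ℂ → ℂ) (hg : DifferentiableOn ℂ g (ball 0 1)) (ρ : ℝ)
    (h0 : 0 < ρ) (h1 : ρ < 1) (w : ℂ) (hw : ‖w‖ < ρ) :
    ∫ θ in (0:ℝ)..(2*Real.pi), g ((ρ:ℂ) * Complex.exp (θ * Complex.I)) *
      ((ρ:ℂ) * Complex.exp (θ * Complex.I) / ((ρ:ℂ) * Complex.exp (θ * Complex.I) - w))
      = 2 * Real.pi * g w := by
  have hdc : DiffContOnCl ℂ g (ball 0 ρ) := by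
    apply DifferentiableOn.diffContOnCl
    rw [closure_ball (0:ℂ) h0.ne']
    exact hg.mono (closedBall_subset_ball h1)
  have hmem : w ∈ ball (0:ℂ) ρ := by rwa [mem_ball_zero_iff]
  have hC := hdc.circleIntegral_sub_inv_smul hmem
  rw [circleIntegral] at hC
  simp only [deriv_circleMap, circleMap_zero, smul_eq_mul] at hC
  have h2 : ∫ θ in (0:ℝ)..(2*Real.pi), Complex.I *
      (g ((ρ:ℂ) * Complex.exp (θ * Complex.I)) *
        ((ρ:ℂ) * Complex.exp (θ * Complex.I) / ((ρ:ℂ) * Complex.exp (θ * Complex.I) - w)))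
      = 2 * Real.pi * Complex.I * g w := by
    rw [← hC]
    apply intervalIntegral.integral_congr
    intro θ _
    simp only [div_eq_mul_inv]
    ring
  rw [intervalIntegral.integral_const_mul] at h2
  rw [show (2:ℂ) * Real.pi * Complex.I * g w = Complex.I * (2 * Real.pi * g w) by ring] at h2
  exact mul_left_cancel₀ Complex.I_ne_zero h2

lemma mean_zero (g : ℂ → ℂ) (hg : DifferentiableOn ℂ g (ball 0 1)) (z : ℂ) (ρ : ℝ)
    (h0 : 0 < ρ) (h1 : ρ < 1) (hz : ‖z‖ < ρ) :
    ∫ θ in (0:ℝ)..(2*Real.pi), g ((ρ:ℂ) * Complex.exp (θ * Complex.I)) *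
      ((ρ:ℂ) * Complex.exp (θ * Complex.I) *
        Complex.log (1 - (starRingEnd ℂ) z * ((ρ:ℂ) * Complex.exp (θ * Complex.I)) / (ρ:ℂ)^2))
      = 0 := by
  set s : ℂ := (starRingEnd ℂ) z / (ρ:ℂ)^2 with hs
  have hρC : ((ρ:ℂ)) ≠ 0 := Complex.ofReal_ne_zero.2 h0.ne'
  have habs_s : ∀ ξ : ℂ, ‖ξ‖ ≤ ρ → ‖s * ξ‖ < 1 := by
    intro ξ hξ
    rw [norm_mul, hs, norm_div, norm_pow, Complex.norm_conj, Complex.norm_real, Real.norm_eq_abs, abs_of_pos h0]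
    calc ‖z‖ / ρ^2 * ‖ξ‖ ≤ ‖z‖ / ρ^2 * ρ := by
          apply mul_le_mul_of_nonneg_left hξ (by positivity)
      _ = ‖z‖ / ρ := by field_simp
      _ < 1 := by rw [div_lt_one h0]; exact hz
  set φ : ℂ → ℂ := fun ξ => g ξ * (ξ * Complex.log (1 - s * ξ)) with hφ
  have hφd : DifferentiableOn ℂ φ (closedBall 0 ρ) := by
    intro ξ hξ
    apply DifferentiableAt.differentiableWithinAt
    have hξρ : ‖ξ‖ ≤ ρ := by
      rw [mem_closedBall_zero_iff] at hξ; exact hξ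
    have hξ1 : ξ ∈ ball (0:ℂ) 1 := closedBall_subset_ball h1 hξ
    have hlog : DifferentiableAt ℂ (fun ξ : ℂ => Complex.log (1 - s * ξ)) ξ := by
      apply DifferentiableAt.clog
      · fun_prop
      · exact slit_of_abs_lt (habs_s ξ hξρ)
    exact (hg.differentiableAt (isOpen_ball.mem_nhds hξ1)).mul (differentiableAt_id.mul hlog)
  have hdc : DiffContOnCl ℂ φ (ball 0 ρ) := by
    apply DifferentiableOn.diffContOnCl
    rwa [closure_ball (0:ℂ) h0.ne']
  have hC := hdc.circleIntegral_sub_inv_smul (mem_ball_self h0)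
  have hφ0 : φ 0 = 0 := by simp [hφ]
  rw [circleIntegral] at hC
  simp only [deriv_circleMap, circleMap_zero, smul_eq_mul, sub_zero, hφ0, mul_zero] at hC
  have hζne : ∀ θ : ℝ, (ρ:ℂ) * Complex.exp (θ * Complex.I) ≠ 0 :=
    fun θ => mul_ne_zero hρC (Complex.exp_ne_zero _)
  have h2 : ∫ θ in (0:ℝ)..(2*Real.pi), Complex.I * φ ((ρ:ℂ) * Complex.exp (θ * Complex.I)) = 0 := by
    rw [← hC]
    apply intervalIntegral.integral_congr
    intro θ _
    field_simp [hζne θ]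
  rw [intervalIntegral.integral_const_mul] at h2
  have h3 : ∫ θ in (0:ℝ)..(2*Real.pi), φ ((ρ:ℂ) * Complex.exp (θ * Complex.I)) = 0 := by
    rcases mul_eq_zero.1 h2 with h | h
    · exact absurd h Complex.I_ne_zero
    · exact h
  rw [← h3]
  apply intervalIntegral.integral_congr
  intro θ _
  simp only [hφ, hs]
  rw [div_mul_eq_mul_div]

lemma key (g : ℂ → ℂ) (hg : DifferentiableOn ℂ g (ball 0 1)) (z : ℂ) (ρ : ℝ)
    (h0 : 0 < ρ) (h1 : ρ < 1) (hz : ‖z‖ < ρ) :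
    ‖∫ t in (0:ℝ)..1, z * g ((t:ℂ) * z)‖ ≤
      (1/2) * ∫ θ in (0:ℝ)..(2*Real.pi),
        ‖g ((ρ:ℂ) * Complex.exp (θ * Complex.I))‖ := by
  have h2pi := Real.two_pi_pos
  set ζ : ℝ → ℂ := fun θ => (ρ:ℂ) * Complex.exp (θ * Complex.I) with hζ
  have hρC : ((ρ:ℂ)) ≠ 0 := Complex.ofReal_ne_zero.2 h0.ne'
  have hζne : ∀ θ : ℝ, ζ θ ≠ 0 := fun θ => mul_ne_zero hρC (Complex.exp_ne_zero _)
  have habsζ : ∀ θ : ℝ, ‖ζ θ‖ = ρ := by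
    intro θ
    simp [hζ, Complex.norm_exp_ofReal_mul_I, abs_of_pos h0]
  have hzζ : ∀ θ : ℝ, ‖z‖ < ‖ζ θ‖ := fun θ => by rw [habsζ]; exact hz
  have hζcont : Continuous ζ := by fun_prop
  have hgc : Continuous (fun θ : ℝ => g (ζ θ)) := cont_circle hg.continuousOn h0.le h1
  have habs_w : ∀ θ : ℝ, ‖z / ζ θ‖ < 1 := by
    intro θ
    rw [norm_div, habsζ, div_lt_one h0]
    exact hz
  have habs_w' : ∀ θ : ℝ, ‖(starRingEnd ℂ) z * ζ θ / (ρ:ℂ)^2‖ < 1 := by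
    intro θ
    rw [norm_div, norm_mul, Complex.norm_conj, habsζ, norm_pow, Complex.norm_real, Real.norm_eq_abs,
      abs_of_pos h0]
    rw [div_lt_one (by positivity), sq]
    exact mul_lt_mul_of_pos_right hz h0
  -- continuity of the two log kernels
  have hLcont : Continuous (fun θ : ℝ => Complex.log (1 - z / ζ θ)) := by
    rw [continuous_iff_continuousAt]
    intro θ
    have hin : ContinuousAt (fun θ : ℝ => 1 - z / ζ θ) θ :=
      (continuousAt_const.sub (continuousAt_const.div hζcont.continuousAt (hζne θ)))
    exact ContinuousAt.comp (x := θ) (continuousAt_clog (slit_of_abs_lt (habs_w θ))) hin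
  have hL'cont : Continuous (fun θ : ℝ => Complex.log (1 - (starRingEnd ℂ) z * ζ θ / (ρ:ℂ)^2)) := by
    rw [continuous_iff_continuousAt]
    intro θ
    have hin : ContinuousAt (fun θ : ℝ => 1 - (starRingEnd ℂ) z * ζ θ / (ρ:ℂ)^2) θ := by
      fun_prop
    exact ContinuousAt.comp (x := θ) (continuousAt_clog (slit_of_abs_lt (habs_w' θ))) hin
  have habs_tz : ∀ t : ℝ, t ∈ Icc (0:ℝ) 1 → ‖(t:ℂ) * z‖ < ρ := by
    intro t ht
    rw [norm_mul, Complex.norm_real, Real.norm_eq_abs, abs_of_nonneg ht.1]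
    calc t * ‖z‖ ≤ 1 * ‖z‖ :=
          mul_le_mul_of_nonneg_right ht.2 (norm_nonneg _)
      _ = ‖z‖ := one_mul _
      _ < ρ := hz
  have hden : ∀ (θ : ℝ) (t : ℝ), t ∈ Icc (0:ℝ) 1 → ζ θ - (t:ℂ) * z ≠ 0 := by
    intro θ t ht h
    rw [sub_eq_zero] at h
    have := habs_tz t ht
    rw [← h, habsζ] at this
    exact lt_irrefl _ this
  -- Step A : the analytic part
  have hA : (∫ θ in (0:ℝ)..(2*Real.pi), g (ζ θ) * (-ζ θ * Complex.log (1 - z / ζ θ)))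
      = (2*Real.pi) * ∫ t in (0:ℝ)..1, z * g ((t:ℂ) * z) := by
    have step1 : (∫ θ in (0:ℝ)..(2*Real.pi), g (ζ θ) * (-ζ θ * Complex.log (1 - z / ζ θ)))
        = ∫ θ in Ioc (0:ℝ) (2*Real.pi), ∫ t in Ioc (0:ℝ) 1,
            g (ζ θ) * (z * ζ θ / (ζ θ - (t:ℂ) * z)) := by
      rw [intervalIntegral.integral_of_le h2pi.le]
      apply setIntegral_congr_fun measurableSet_Ioc
      intro θ _
      dsimp only
      rw [log_kernel_integral z (ζ θ) (hζne θ) (hzζ θ), ← intervalIntegral.integral_const_mul,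
        intervalIntegral.integral_of_le zero_le_one]
    have hFint : Integrable
        (Function.uncurry (fun (θ : ℝ) (t : ℝ) => g (ζ θ) * (z * ζ θ / (ζ θ - (t:ℂ) * z))))
        ((volume.restrict (Ioc (0:ℝ) (2*Real.pi))).prod (volume.restrict (Ioc (0:ℝ) 1))) := by
      rw [Measure.prod_restrict]
      apply IntegrableOn.mono_set (t := Icc (0:ℝ) (2*Real.pi) ×ˢ Icc (0:ℝ) 1)
      · apply ContinuousOn.integrableOn_compact (isCompact_Icc.prod isCompact_Icc)
        apply ContinuousOn.mul
        · exact (hgc.comp continuous_fst).continuousOn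
        · apply ContinuousOn.div
          · exact (continuous_const.mul (hζcont.comp continuous_fst)).continuousOn
          · exact ((hζcont.comp continuous_fst).sub
              ((Complex.continuous_ofReal.comp continuous_snd).mul continuous_const)).continuousOn
          · intro p hp
            exact hden p.1 p.2 hp.2
      · exact prod_mono Ioc_subset_Icc_self Ioc_subset_Icc_self
    have step2 := MeasureTheory.integral_integral_swap hFint
    rw [step1, step2]
    have step3 : ∀ t ∈ Ioc (0:ℝ) 1,
        (∫ θ in Ioc (0:ℝ) (2*Real.pi), g (ζ θ) * (z * ζ θ / (ζ θ - (t:ℂ) * z)))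
          = (2*Real.pi) * (z * g ((t:ℂ) * z)) := by
      intro t ht
      have htI : t ∈ Icc (0:ℝ) 1 := Ioc_subset_Icc_self ht
      rw [← intervalIntegral.integral_of_le h2pi.le]
      have : (∫ θ in (0:ℝ)..(2*Real.pi), g (ζ θ) * (z * ζ θ / (ζ θ - (t:ℂ) * z)))
          = z * ∫ θ in (0:ℝ)..(2*Real.pi), g (ζ θ) * (ζ θ / (ζ θ - (t:ℂ) * z)) := by
        rw [← intervalIntegral.integral_const_mul]
        apply intervalIntegral.integral_congr
        intro θ _
        dsimp only
        ring
      rw [this, cauchy_formula g hg ρ h0 h1 ((t:ℂ) * z) (habs_tz t htI)]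
      ring
    rw [setIntegral_congr_fun measurableSet_Ioc step3, MeasureTheory.integral_const_mul,
      ← intervalIntegral.integral_of_le zero_le_one]
  -- Step B : the conjugate part vanishes
  have hB := mean_zero g hg z ρ h0 h1 hz
  -- combine
  have hzero : (0:ℂ) = ∫ θ in (0:ℝ)..(2*Real.pi), g (ζ θ) *
      (ζ θ * Complex.log (1 - (starRingEnd ℂ) z * ζ θ / (ρ:ℂ)^2)) := hB.symm
  have int1 : IntervalIntegrable (fun θ : ℝ => g (ζ θ) * (-ζ θ * Complex.log (1 - z / ζ θ)))
      volume 0 (2*Real.pi) :=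
    (hgc.mul ((hζcont.neg).mul hLcont)).intervalIntegrable _ _
  have int2 : IntervalIntegrable (fun θ : ℝ => g (ζ θ) *
      (ζ θ * Complex.log (1 - (starRingEnd ℂ) z * ζ θ / (ρ:ℂ)^2))) volume 0 (2*Real.pi) :=
    (hgc.mul (hζcont.mul hL'cont)).intervalIntegrable _ _
  have hI : (∫ θ in (0:ℝ)..(2*Real.pi), g (ζ θ) *
        (-ζ θ * (Complex.log (1 - z / ζ θ)
          - Complex.log (1 - (starRingEnd ℂ) z * ζ θ / (ρ:ℂ)^2))))
      = (2*Real.pi) * ∫ t in (0:ℝ)..1, z * g ((t:ℂ) * z) := by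
    have : (fun θ : ℝ => g (ζ θ) * (-ζ θ * (Complex.log (1 - z / ζ θ)
          - Complex.log (1 - (starRingEnd ℂ) z * ζ θ / (ρ:ℂ)^2))))
        = fun θ : ℝ => g (ζ θ) * (-ζ θ * Complex.log (1 - z / ζ θ))
            + g (ζ θ) * (ζ θ * Complex.log (1 - (starRingEnd ℂ) z * ζ θ / (ρ:ℂ)^2)) := by
      funext θ
      ring
    rw [this, intervalIntegral.integral_add int1 int2, hA, hB, add_zero]
  -- kernel bound
  have hK : ∀ θ : ℝ, ‖-ζ θ * (Complex.log (1 - z / ζ θ)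
      - Complex.log (1 - (starRingEnd ℂ) z * ζ θ / (ρ:ℂ)^2))‖ ≤ Real.pi := by
    intro θ
    have hconj : (1 : ℂ) - (starRingEnd ℂ) z * ζ θ / (ρ:ℂ)^2
        = (starRingEnd ℂ) (1 - z / ζ θ) := by
      have hcc : ζ θ * (starRingEnd ℂ) (ζ θ) = ((ρ:ℂ))^2 := by
        rw [Complex.mul_conj]
        rw [Complex.normSq_eq_norm_sq, habsζ]
        push_cast
        ring
      rw [map_sub, map_one, map_div₀]
      congr 1
      rw [eq_div_iff (by
        intro hc
        apply hζne θ
        simpa using congrArg (starRingEnd ℂ) hc)]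
      field_simp
      linear_combination (starRingEnd ℂ) z * hcc
    rw [hconj, Complex.log_conj _ (arg_ne_pi_of_abs_lt (habs_w θ))]
    rw [Complex.sub_conj]
    rw [norm_mul, norm_mul]
    simp only [norm_neg, habsζ, Complex.norm_real, Real.norm_eq_abs, Complex.norm_I, mul_one]
    have him : |(Complex.log (1 - z / ζ θ)).im| ≤ Real.pi / 2 := by
      rw [Complex.log_im]
      exact Complex.abs_arg_le_pi_div_two_iff.2 (re_pos_of_abs_lt (habs_w θ)).le
    calc ρ * (|2 * (Complex.log (1 - z / ζ θ)).im|)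
        ≤ 1 * (2 * (Real.pi / 2)) := by
          apply mul_le_mul h1.le ?_ (abs_nonneg _) zero_le_one
          rw [abs_mul]
          simp only [abs_two]
          linarith [him]
      _ = Real.pi := by ring
  -- final estimate
  have hV := hI
  have h2pine : (2*Real.pi : ℝ) ≠ 0 := h2pi.ne'
  have hVeq : (∫ t in (0:ℝ)..1, z * g ((t:ℂ) * z))
      = (1/(2*Real.pi) : ℝ) * ∫ θ in (0:ℝ)..(2*Real.pi), g (ζ θ) *
        (-ζ θ * (Complex.log (1 - z / ζ θ)
          - Complex.log (1 - (starRingEnd ℂ) z * ζ θ / (ρ:ℂ)^2))) := by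
    rw [hI, ← mul_assoc,
      show ((1/(2*Real.pi) : ℝ) : ℂ) * (2*Real.pi) = 1 by push_cast; rw [one_div, inv_mul_cancel₀ (by simp [Real.pi_ne_zero])], one_mul]
  rw [hVeq, norm_mul]
  have habs1 : ‖((1/(2*Real.pi) : ℝ) : ℂ)‖ = 1/(2*Real.pi) := by
    rw [Complex.norm_real, Real.norm_eq_abs, abs_of_pos (by positivity)]
  rw [habs1]
  have hnorm : ‖∫ θ in (0:ℝ)..(2*Real.pi), g (ζ θ) *
        (-ζ θ * (Complex.log (1 - z / ζ θ)
          - Complex.log (1 - (starRingEnd ℂ) z * ζ θ / (ρ:ℂ)^2)))‖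
      ≤ ∫ θ in (0:ℝ)..(2*Real.pi), Real.pi * ‖g (ζ θ)‖ := by
    calc ‖∫ θ in (0:ℝ)..(2*Real.pi), g (ζ θ) *
          (-ζ θ * (Complex.log (1 - z / ζ θ)
            - Complex.log (1 - (starRingEnd ℂ) z * ζ θ / (ρ:ℂ)^2)))‖
        ≤ ∫ θ in (0:ℝ)..(2*Real.pi), ‖g (ζ θ) *
          (-ζ θ * (Complex.log (1 - z / ζ θ)
            - Complex.log (1 - (starRingEnd ℂ) z * ζ θ / (ρ:ℂ)^2)))‖ := by
          exact intervalIntegral.norm_integral_le_integral_norm h2pi.le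
      _ ≤ ∫ θ in (0:ℝ)..(2*Real.pi), Real.pi * ‖g (ζ θ)‖ := by
          apply intervalIntegral.integral_mono_on h2pi.le
          · apply ContinuousOn.intervalIntegrable
            apply Continuous.continuousOn
            have : Continuous (fun θ : ℝ => g (ζ θ) *
              (-ζ θ * (Complex.log (1 - z / ζ θ)
                - Complex.log (1 - (starRingEnd ℂ) z * ζ θ / (ρ:ℂ)^2)))) :=
              hgc.mul ((hζcont.neg).mul (hLcont.sub hL'cont))
            exact continuous_norm.comp this
          · exact (continuous_const.mul (continuous_norm.comp hgc)).continuousOn.intervalIntegrable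
          · intro θ _
            rw [norm_mul, mul_comm]
            exact mul_le_mul_of_nonneg_right (hK θ) (norm_nonneg _)
  calc (1/(2*Real.pi)) * ‖∫ θ in (0:ℝ)..(2*Real.pi), g (ζ θ) *
        (-ζ θ * (Complex.log (1 - z / ζ θ)
          - Complex.log (1 - (starRingEnd ℂ) z * ζ θ / (ρ:ℂ)^2)))‖
      ≤ (1/(2*Real.pi)) * ∫ θ in (0:ℝ)..(2*Real.pi), Real.pi * ‖g (ζ θ)‖ := by
        exact mul_le_mul_of_nonneg_left hnorm (by positivity)
    _ = (1/2) * ∫ θ in (0:ℝ)..(2*Real.pi), ‖g (ζ θ)‖ := by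
        rw [intervalIntegral.integral_const_mul]
        field_simp

lemma ftc (F : ℂ → ℂ) (hF : DifferentiableOn ℂ F (ball 0 1)) (z : ℂ) (hz : z ∈ ball (0:ℂ) 1) :
    F z = F 0 + ∫ t in (0:ℝ)..1, z * deriv F ((t:ℂ) * z) := by
  rw [mem_ball_zero_iff] at hz
  have hmem : ∀ t : ℝ, t ∈ Icc (0:ℝ) 1 → (t:ℂ) * z ∈ ball (0:ℂ) 1 := by
    intro t ht
    rw [mem_ball_zero_iff, norm_mul, Complex.norm_real, Real.norm_eq_abs, abs_of_nonneg ht.1]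
    calc t * ‖z‖ ≤ 1 * ‖z‖ :=
          mul_le_mul_of_nonneg_right ht.2 (norm_nonneg _)
      _ = ‖z‖ := one_mul _
      _ < 1 := hz
  have hderiv : ∀ t ∈ uIcc (0:ℝ) 1,
      HasDerivAt (fun s : ℝ => F ((s:ℂ) * z)) (z * deriv F ((t:ℂ) * z)) t := by
    intro t ht
    rw [uIcc_of_le zero_le_one] at ht
    have hFd : HasDerivAt F (deriv F ((t:ℂ) * z)) ((t:ℂ) * z) :=
      (hF.differentiableAt (isOpen_ball.mem_nhds (hmem t ht))).hasDerivAt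
    have h2 : HasDerivAt (fun w : ℂ => w * z) z (t:ℂ) := by
      simpa using (hasDerivAt_id ((t:ℂ))).mul_const z
    have hψ := HasDerivAt.comp ((t:ℂ)) hFd h2
    have := hψ.comp_ofReal
    simpa [Function.comp, mul_comm] using this
  have hcont : IntervalIntegrable (fun t : ℝ => z * deriv F ((t:ℂ) * z)) volume 0 1 := by
    apply ContinuousOn.intervalIntegrable
    rw [uIcc_of_le zero_le_one]
    apply ContinuousOn.mul continuousOn_const
    have hdc : ContinuousOn (deriv F) (ball 0 1) := (diffOn_deriv F hF).continuousOn
    apply ContinuousOn.comp hdc ((Complex.continuous_ofReal.mul continuous_const).continuousOn)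
    intro t ht
    exact hmem t ht
  have := intervalIntegral.integral_eq_sub_of_hasDerivAt hderiv hcont
  rw [this]
  simp

lemma radial_le_hardy1 (g : ℂ → ℂ) (hg : DifferentiableOn ℂ g (ball 0 1)) (z : ℂ)
    (hz : z ∈ ball (0:ℂ) 1) :
    ENNReal.ofReal (‖∫ t in (0:ℝ)..1, z * g ((t:ℂ) * z)‖)
      ≤ ENNReal.ofReal Real.pi * hardyNorm 1 g := by
  rw [mem_ball_zero_iff] at hz
  set ρ : ℝ := (‖z‖ + 1)/2 with hρ
  have h0 : 0 < ρ := by positivity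
  have h1 : ρ < 1 := by rw [hρ]; linarith
  have hzρ : ‖z‖ < ρ := by rw [hρ]; linarith
  have hkey := key g hg z ρ h0 h1 hzρ
  have hgc : Continuous (fun θ : ℝ => ‖g ((ρ:ℂ) * Complex.exp (θ * Complex.I))‖) :=
    continuous_norm.comp (cont_circle hg.continuousOn h0.le h1)
  have hint : IntegrableOn (fun θ : ℝ => ‖g ((ρ:ℂ) * Complex.exp (θ * Complex.I))‖)
      (Ioc 0 (2*Real.pi)) volume := hgc.integrableOn_Ioc
  set L : ENNReal := ∫⁻ θ in Ioc (0:ℝ) (2*Real.pi),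
      ENNReal.ofReal (‖g ((ρ:ℂ) * Complex.exp (θ * Complex.I))‖) with hL
  have hof : ENNReal.ofReal (∫ θ in Ioc (0:ℝ) (2*Real.pi),
      ‖g ((ρ:ℂ) * Complex.exp (θ * Complex.I))‖) = L :=
    ofReal_integral_eq_lintegral_ofReal hint
      (Filter.Eventually.of_forall fun θ => norm_nonneg _)
  have hM : (L / ENNReal.ofReal (2*Real.pi)) ≤ hardyNorm 1 g := by
    have := le_iSup (fun r : Set.Ioo (0:ℝ) 1 =>
      ((∫⁻ θ in Set.Ioc (0:ℝ) (2*Real.pi),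
        ENNReal.ofReal (‖g ((r:ℝ) * Complex.exp (θ * Complex.I))‖ ^ (1:ℝ))) /
      ENNReal.ofReal (2*Real.pi)) ^ (1/(1:ℝ))) ⟨ρ, h0, h1⟩
    simpa [hardyNorm, Real.rpow_one, hL] using this
  calc ENNReal.ofReal (‖∫ t in (0:ℝ)..1, z * g ((t:ℂ) * z)‖)
      ≤ ENNReal.ofReal ((1/2) * ∫ θ in (0:ℝ)..(2*Real.pi),
          ‖g ((ρ:ℂ) * Complex.exp (θ * Complex.I))‖) :=
        ENNReal.ofReal_le_ofReal hkey
    _ = ENNReal.ofReal (1/2) * L := by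
        rw [ENNReal.ofReal_mul (by norm_num), intervalIntegral.integral_of_le Real.two_pi_pos.le,
          hof]
    _ = ENNReal.ofReal Real.pi * (L / ENNReal.ofReal (2*Real.pi)) := by
        have h : ENNReal.ofReal Real.pi / ENNReal.ofReal (2*Real.pi) = ENNReal.ofReal (1/2) := by
          rw [← ENNReal.ofReal_div_of_pos Real.two_pi_pos]
          congr 1
          rw [eq_div_iff (by norm_num : (2:ℝ) ≠ 0)]
          field_simp
        rw [← h, div_eq_mul_inv, div_eq_mul_inv, mul_assoc, mul_comm (ENNReal.ofReal (2*Real.pi))⁻¹ L]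
    _ ≤ ENNReal.ofReal Real.pi * hardyNorm 1 g := mul_le_mul_right hM _

lemma abs0_le_supNorm (g : ℂ → ℂ) : ENNReal.ofReal (‖g 0‖) ≤ supNorm g :=
  le_iSup₂_of_le (0:ℂ) (mem_ball_self one_pos) le_rfl

lemma supNorm_le (F : ℂ → ℂ) (hF : DifferentiableOn ℂ F (ball 0 1)) :
    supNorm F ≤ ENNReal.ofReal (‖F 0‖)
      + ENNReal.ofReal Real.pi * hardyNorm 1 (deriv F) := by
  apply iSup₂_le
  intro z hz
  rw [ftc F hF z hz]
  calc ENNReal.ofReal (‖F 0 + ∫ t in (0:ℝ)..1, z * deriv F ((t:ℂ) * z)‖)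
      ≤ ENNReal.ofReal (‖F 0‖
          + ‖∫ t in (0:ℝ)..1, z * deriv F ((t:ℂ) * z)‖) :=
        ENNReal.ofReal_le_ofReal (norm_add_le _ _)
    _ = ENNReal.ofReal (‖F 0‖)
          + ENNReal.ofReal (‖∫ t in (0:ℝ)..1, z * deriv F ((t:ℂ) * z)‖) :=
        ENNReal.ofReal_add (norm_nonneg _) (norm_nonneg _)
    _ ≤ ENNReal.ofReal (‖F 0‖) + ENNReal.ofReal Real.pi * hardyNorm 1 (deriv F) :=
        add_le_add_right (radial_le_hardy1 (deriv F) (diffOn_deriv F hF) z hz) _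

lemma hardy1_le_hardyp (p : ℝ) (hp : 1 ≤ p) (g : ℂ → ℂ)
    (hc : ContinuousOn g (ball 0 1)) : hardyNorm 1 g ≤ hardyNorm p g := by
  rcases eq_or_lt_of_le hp with h | h
  · rw [← h]
  · apply iSup_le
    intro r
    refine le_trans ?_ (le_iSup (fun r : Set.Ioo (0:ℝ) 1 =>
      ((∫⁻ θ in Set.Ioc (0:ℝ) (2*Real.pi),
        ENNReal.ofReal (‖g ((r:ℝ) * Complex.exp (θ * Complex.I))‖ ^ p)) /
      ENNReal.ofReal (2*Real.pi)) ^ (1/p)) r)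
    -- per radius
    set F : ℝ → ENNReal :=
      fun θ => ENNReal.ofReal (‖g ((r:ℝ) * Complex.exp (θ * Complex.I))‖) with hF
    have hFm : AEMeasurable F (volume.restrict (Ioc (0:ℝ) (2*Real.pi))) :=
      ((continuous_norm.comp
        (cont_circle hc r.2.1.le r.2.2)).measurable.ennreal_ofReal).aemeasurable
    have hp0 : (0:ℝ) ≤ p := le_trans zero_le_one hp
    set c : ENNReal := ENNReal.ofReal (2*Real.pi) with hcdef
    have hc0 : c ≠ 0 := by
      rw [hcdef, Ne, ENNReal.ofReal_eq_zero, not_le]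
      positivity
    have hct : c ≠ ⊤ := ENNReal.ofReal_ne_top
    have hrw1 : (fun θ : ℝ => ENNReal.ofReal
        (‖g ((r:ℝ) * Complex.exp (θ * Complex.I))‖ ^ (1:ℝ))) = F := by
      funext θ
      rw [Real.rpow_one, hF]
    have hrwp : ∀ θ : ℝ, ENNReal.ofReal
        (‖g ((r:ℝ) * Complex.exp (θ * Complex.I))‖ ^ p) = F θ ^ p := by
      intro θ
      rw [hF, ENNReal.ofReal_rpow_of_nonneg (norm_nonneg _) hp0]
    have hq := Real.HolderConjugate.conjExponent h
    set q : ℝ := Real.conjExponent p with hqdef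
    have hqpos : 0 < q := hq.symm.pos
    have holder := ENNReal.lintegral_mul_le_Lp_mul_Lq
      (volume.restrict (Ioc (0:ℝ) (2*Real.pi))) hq hFm aemeasurable_const (g := fun _ => 1)
    simp only [Pi.mul_apply, mul_one, one_mul, ENNReal.one_rpow, lintegral_const,
      Measure.restrict_apply MeasurableSet.univ, univ_inter, Real.volume_Ioc, sub_zero] at holder
    -- holder : ∫⁻ F ≤ (∫⁻ F^p)^(1/p) * (ofReal (2π))^(1/q)
    have goal1 : (∫⁻ θ in Ioc (0:ℝ) (2*Real.pi), F θ) / c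
        ≤ ((∫⁻ θ in Ioc (0:ℝ) (2*Real.pi), F θ ^ p) / c) ^ (1/p) := by
      rw [ENNReal.div_rpow_of_nonneg _ _ (by positivity)]
      calc (∫⁻ θ in Ioc (0:ℝ) (2*Real.pi), F θ) / c
          ≤ ((∫⁻ θ in Ioc (0:ℝ) (2*Real.pi), F θ ^ p) ^ (1/p) * c ^ (1/q)) / c :=
            ENNReal.div_le_div_right holder c
        _ = (∫⁻ θ in Ioc (0:ℝ) (2*Real.pi), F θ ^ p) ^ (1/p) * (c ^ (1/q) / c) := by
            rw [mul_div_assoc]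
        _ = (∫⁻ θ in Ioc (0:ℝ) (2*Real.pi), F θ ^ p) ^ (1/p) / c ^ (1/p) := by
            rw [show c ^ (1/q) / c = c ^ (1/q) / c ^ (1:ℝ) by rw [ENNReal.rpow_one],
              ← ENNReal.rpow_sub _ _ hc0 hct,
              show (1/q - 1 : ℝ) = -(1/p) by
                have hsum := hq.inv_add_inv_eq_one
                rw [one_div, one_div]; linarith,
              ENNReal.rpow_neg, div_eq_mul_inv]
            rw [div_eq_mul_inv]
    calc ((∫⁻ θ in Ioc (0:ℝ) (2*Real.pi),
          ENNReal.ofReal (‖g ((r:ℝ) * Complex.exp (θ * Complex.I))‖ ^ (1:ℝ))) / c)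
          ^ (1/(1:ℝ))
        = (∫⁻ θ in Ioc (0:ℝ) (2*Real.pi), F θ) / c := by
          rw [hrw1]
          norm_num
      _ ≤ ((∫⁻ θ in Ioc (0:ℝ) (2*Real.pi), F θ ^ p) / c) ^ (1/p) := goal1
      _ = ((∫⁻ θ in Ioc (0:ℝ) (2*Real.pi),
          ENNReal.ofReal (‖g ((r:ℝ) * Complex.exp (θ * Complex.I))‖ ^ p)) / c)
          ^ (1/p) := by
          congr 2
          apply lintegral_congr
          intro θ
          rw [hrwp θ]

lemma hardy1_le_supNorm (g : ℂ → ℂ) : hardyNorm 1 g ≤ supNorm g := by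
  apply iSup_le
  intro r
  have hptw : ∀ θ : ℝ, ENNReal.ofReal
      (‖g ((r:ℝ) * Complex.exp (θ * Complex.I))‖ ^ (1:ℝ)) ≤ supNorm g := by
    intro θ
    rw [Real.rpow_one]
    exact le_iSup₂_of_le ((r:ℝ) * Complex.exp (θ * Complex.I))
      (zeta_mem_ball θ r.2.1.le r.2.2) le_rfl
  calc ((∫⁻ θ in Ioc (0:ℝ) (2*Real.pi),
        ENNReal.ofReal (‖g ((r:ℝ) * Complex.exp (θ * Complex.I))‖ ^ (1:ℝ))) /
        ENNReal.ofReal (2*Real.pi)) ^ (1/(1:ℝ))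
      ≤ ((∫⁻ _ in Ioc (0:ℝ) (2*Real.pi), supNorm g) /
        ENNReal.ofReal (2*Real.pi)) ^ (1/(1:ℝ)) := by
        apply ENNReal.rpow_le_rpow _ (by norm_num)
        exact ENNReal.div_le_div_right (lintegral_mono hptw) _
    _ = supNorm g * (ENNReal.ofReal (2*Real.pi) / ENNReal.ofReal (2*Real.pi)) := by
        rw [setLIntegral_const, Real.volume_Ioc, sub_zero]
        norm_num
        rw [mul_div_assoc]
    _ ≤ supNorm g * 1 := mul_le_mul_right ENNReal.div_self_le_one _
    _ = supNorm g := mul_one _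

theorem equiv_norm_sup_sum (n : ℕ) (p : ℝ) (hn : 1 ≤ n) (hp : 1 ≤ p) :
    ∃ C₁ C₂ : ℝ, 0 < C₁ ∧ 0 < C₂ ∧ ∀ f : ℂ → ℂ, MemS n p f →
      snNorm n p f ≤
        ENNReal.ofReal C₁ *
          (∑ k ∈ Finset.range n, supNorm (iteratedDeriv k f) +
            hardyNorm p (iteratedDeriv n f)) ∧
      (∑ k ∈ Finset.range n, supNorm (iteratedDeriv k f) +
          hardyNorm p (iteratedDeriv n f)) ≤
        ENNReal.ofReal C₂ * snNorm n p f := by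
  refine ⟨1, (n:ℝ) * (1+Real.pi)^n + 1, one_pos, by positivity, ?_⟩
  intro f hf
  obtain ⟨hfd, hH⟩ := hf
  have hdk : ∀ k, DifferentiableOn ℂ (iteratedDeriv k f) (ball 0 1) :=
    diffOn_iteratedDeriv f hfd
  have hNeq := snNorm_eq n p f
  have haN : ∀ k, k < n → ENNReal.ofReal (‖iteratedDeriv k f 0‖) ≤ snNorm n p f := by
    intro k hk
    rw [hNeq]
    refine le_trans ?_ le_self_add
    exact Finset.single_le_sum (f := fun k => ENNReal.ofReal (‖iteratedDeriv k f 0‖))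
      (fun _ _ => zero_le) (Finset.mem_range.2 hk)
  have hHN : hardyNorm p (iteratedDeriv n f) ≤ snNorm n p f := by
    rw [hNeq]; exact le_add_self
  constructor
  · rw [hNeq, ENNReal.ofReal_one, one_mul]
    refine add_le_add ?_ le_rfl
    apply Finset.sum_le_sum
    intro k _
    exact abs0_le_supNorm _
  · set c : ENNReal := ENNReal.ofReal Real.pi with hcdef
    set D : ENNReal := 1 + c with hDdef
    have hD1 : (1:ENNReal) ≤ D := le_self_add
    have hstep : ∀ k, k + 1 ≤ n → supNorm (iteratedDeriv k f) ≤
        ENNReal.ofReal (‖iteratedDeriv k f 0‖)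
          + c * hardyNorm 1 (iteratedDeriv (k+1) f) := by
      intro k _
      have h := supNorm_le (iteratedDeriv k f) (hdk k)
      rwa [← iteratedDeriv_succ] at h
    have hlast : hardyNorm 1 (iteratedDeriv n f) ≤ snNorm n p f :=
      le_trans (hardy1_le_hardyp p hp _ (hdk n).continuousOn) hHN
    have hrec : ∀ j, j < n → supNorm (iteratedDeriv (n - 1 - j) f) ≤ D^(j+1) * snNorm n p f := by
      intro j
      induction j with
      | zero =>
        intro hj
        have hn1 : n - 1 - 0 + 1 = n := by omega
        calc supNorm (iteratedDeriv (n-1-0) f)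
            ≤ ENNReal.ofReal (‖iteratedDeriv (n-1-0) f 0‖)
              + c * hardyNorm 1 (iteratedDeriv (n-1-0+1) f) := hstep _ (by omega)
          _ ≤ snNorm n p f + c * snNorm n p f := by
              refine add_le_add (haN _ (by omega)) (mul_le_mul_right ?_ c)
              rw [hn1]
              exact hlast
          _ = D^1 * snNorm n p f := by
              rw [pow_one, hDdef, add_mul, one_mul]
      | succ j ih =>
        intro hj
        have hk1 : (n - 1 - (j+1)) + 1 = n - 1 - j := by omega
        calc supNorm (iteratedDeriv (n-1-(j+1)) f)
            ≤ ENNReal.ofReal (‖iteratedDeriv (n-1-(j+1)) f 0‖)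
              + c * hardyNorm 1 (iteratedDeriv ((n-1-(j+1))+1) f) := hstep _ (by omega)
          _ ≤ snNorm n p f + c * supNorm (iteratedDeriv ((n-1-(j+1))+1) f) := by
              exact add_le_add (haN _ (by omega)) (mul_le_mul_right (hardy1_le_supNorm _) c)
          _ ≤ snNorm n p f + c * (D^(j+1) * snNorm n p f) := by
              refine add_le_add le_rfl (mul_le_mul_right ?_ c)
              rw [hk1]
              exact ih (by omega)
          _ ≤ D^(j+1+1) * snNorm n p f := by
              have h1 : (1:ENNReal) ≤ D^(j+1) := by
                calc (1:ENNReal) = 1^(j+1) := (one_pow _).symm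
                  _ ≤ D^(j+1) := pow_le_pow_left₀ zero_le hD1 _
              calc snNorm n p f + c * (D^(j+1) * snNorm n p f)
                  = (1 + c * D^(j+1)) * snNorm n p f := by ring
                _ ≤ (D^(j+1) + c * D^(j+1)) * snNorm n p f := by
                    exact mul_le_mul_left (add_le_add h1 le_rfl) _
                _ = D^(j+1+1) * snNorm n p f := by
                    rw [pow_succ]
                    ring
    have hfinal : ∀ k, k < n → supNorm (iteratedDeriv k f) ≤ D^n * snNorm n p f := by
      intro k hk
      have hj : n - 1 - (n - 1 - k) = k := by omega
      calc supNorm (iteratedDeriv k f)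
          = supNorm (iteratedDeriv (n-1-(n-1-k)) f) := by rw [hj]
        _ ≤ D^((n-1-k)+1) * snNorm n p f := hrec _ (by omega)
        _ ≤ D^n * snNorm n p f :=
            mul_le_mul_left (pow_le_pow_right₀ hD1 (by omega)) _
    have hC2 : ENNReal.ofReal ((n:ℝ) * (1+Real.pi)^n + 1) = (n:ENNReal) * D^n + 1 := by
      rw [ENNReal.ofReal_add (by positivity) zero_le_one, ENNReal.ofReal_one,
        ENNReal.ofReal_mul (by positivity), ENNReal.ofReal_natCast,
        ENNReal.ofReal_pow (by positivity), ENNReal.ofReal_add zero_le_one Real.pi_pos.le,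
        ENNReal.ofReal_one, hDdef, hcdef]
    calc ∑ k ∈ Finset.range n, supNorm (iteratedDeriv k f) + hardyNorm p (iteratedDeriv n f)
        ≤ ∑ _k ∈ Finset.range n, (D^n * snNorm n p f) + snNorm n p f := by
          exact add_le_add (Finset.sum_le_sum fun k hk => hfinal k (Finset.mem_range.1 hk)) hHN
      _ = ((n:ENNReal) * D^n + 1) * snNorm n p f := by
          rw [Finset.sum_const, Finset.card_range, nsmul_eq_mul]
          ring
      _ = ENNReal.ofReal ((n:ℝ) * (1+Real.pi)^n + 1) * snNorm n p f := by rw [hC2]
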